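/- Let ν be a probability measure on a compact topological space X and let F : X → ℝ ∪ {+∞} be measurable and bounded below. Set ν̂ = e^{-F} ν. Suppose there exists p > 1 with ∫_X e^{-pF} dν = C < ∞. Then for every probability measure μ on X with finite relative entropy with respect to ν̂, one has Ent(μ|ν) ≤ (p/(p-1)) Ent(μ|ν̂) + (log C)/(p-1). -/

import Mathlib

open MeasureTheory Real

/-- Relative entropy of a probability measure with respect to a probability measure
is nonnegative. -/
lemma aux_integral_llr_nonneg {X : Type*} [MeasurableSpace X] {μ ρ : Measure X}
    [IsProbabilityMeasure μ] [IsProbabilityMeasure ρ] (hμρ : μ ≪ ρ)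
    (h_int : Integrable (llr μ ρ) μ) : 0 ≤ ∫ x, llr μ ρ x ∂μ := by
  have h_int' : Integrable (llr ρ μ) μ :=
    (h_int.neg).congr (neg_llr hμρ)
  have hEq : ∫ x, llr ρ μ x ∂μ = - ∫ x, llr μ ρ x ∂μ := by
    rw [← integral_neg]
    exact integral_congr_ae (neg_llr hμρ).symm
  have hpos : ∀ᵐ x ∂μ, 0 < ρ.rnDeriv μ x := Measure.rnDeriv_pos' hμρ
  have hlt : ∀ᵐ x ∂μ, ρ.rnDeriv μ x < ⊤ := Measure.rnDeriv_lt_top ρ μ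
  have hle : ∀ᵐ x ∂μ, llr ρ μ x ≤ (ρ.rnDeriv μ x).toReal - 1 := by
    filter_upwards [hpos, hlt] with x hx hx'
    have hxpos : 0 < (ρ.rnDeriv μ x).toReal := ENNReal.toReal_pos hx.ne' hx'.ne
    exact Real.log_le_sub_one_of_pos hxpos
  have h_int_rn : Integrable (fun x => (ρ.rnDeriv μ x).toReal) μ :=
    Measure.integrable_toReal_rnDeriv
  have hbound : ∫ x, llr ρ μ x ∂μ ≤ ∫ x, ((ρ.rnDeriv μ x).toReal - 1) ∂μ :=
    integral_mono_ae h_int' (h_int_rn.sub (integrable_const 1)) hle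
  have hint_le : ∫ x, (ρ.rnDeriv μ x).toReal ∂μ ≤ 1 := by
    rw [Measure.integral_toReal_rnDeriv']
    have h1 : ρ.real Set.univ = 1 := by simp
    have h2 : 0 ≤ (ρ.singularPart μ).real Set.univ := ENNReal.toReal_nonneg
    linarith
  have : ∫ x, ((ρ.rnDeriv μ x).toReal - 1) ∂μ ≤ 0 := by
    rw [integral_sub h_int_rn (integrable_const 1)]
    simp only [integral_const, measure_univ, probReal_univ, ENNReal.toReal_one, smul_eq_mul, one_mul]
    linarith
  linarith [hEq ▸ (hbound.trans this)]

/-- Entropy stability: let `ν` be a probability measure on a compact space `X`, `F`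
measurable and bounded below, `nuh = e^{-F} ν`. If `∫ e^{-pF} dν = C < ∞` for some `p > 1`,
then for every probability measure `μ` with finite relative entropy with respect to `nuh`,
`Ent(μ|ν) ≤ (p/(p-1)) Ent(μ|nuh) + (log C)/(p-1)`, where `Ent(μ|ρ) = ∫ llr μ ρ dμ`. -/
theorem entropy_stability
    {X : Type*} [TopologicalSpace X] [CompactSpace X] [MeasurableSpace X]
    (ν μ : Measure X) [IsProbabilityMeasure ν] [IsProbabilityMeasure μ]
    (F : X → ℝ) (hF : Measurable F) (hFbdd : BddBelow (Set.range F))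
    (p C : ℝ) (hp : 1 < p)
    (hexp : Integrable (fun x => Real.exp (-p * F x)) ν)
    (hC : ∫ x, Real.exp (-p * F x) ∂ν = C)
    (hac : μ ≪ ν.withDensity (fun x => ENNReal.ofReal (Real.exp (-F x))))
    (hEnt : Integrable (llr μ (ν.withDensity (fun x => ENNReal.ofReal (Real.exp (-F x))))) μ)
    (hIntF : Integrable F μ) :
    ∫ x, llr μ ν x ∂μ
      ≤ (p / (p - 1)) *
          ∫ x, llr μ (ν.withDensity (fun x => ENNReal.ofReal (Real.exp (-F x)))) x ∂μ
        + Real.log C / (p - 1) := by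
  have hp0 : (0:ℝ) < p - 1 := by linarith
  set nuh : Measure X := ν.withDensity (fun x => ENNReal.ofReal (Real.exp (-F x))) with hnuhdef
  have hμν : μ ≪ ν := hac.trans (withDensity_absolutelyContinuous ν _)
  -- integrability of e^{-F} w.r.t. ν
  have hexpF : Integrable (fun x => Real.exp (-F x)) ν := by
    refine ((integrable_const (1:ℝ)).add hexp).mono'
      (hF.neg.exp.aestronglyMeasurable) (ae_of_all _ fun x => ?_)
    rw [Real.norm_eq_abs, abs_of_pos (Real.exp_pos _)]
    simp only [Pi.add_apply]
    rcases le_or_gt 0 (F x) with h | h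
    · have h1 : Real.exp (-F x) ≤ 1 := Real.exp_le_one_iff.mpr (by linarith)
      have h2 : 0 < Real.exp (-p * F x) := Real.exp_pos _
      linarith
    · have h1 : -F x ≤ -p * F x := by nlinarith
      have := Real.exp_le_exp.mpr h1
      have h2 : (0:ℝ) < 1 := one_pos
      linarith
  set Z : ℝ := ∫ x, Real.exp (-F x) ∂ν with hZ
  have hZpos : 0 < Z := integral_exp_pos (f := fun x => -F x) hexpF
  -- nuh as a scalar multiple of a tilted measure
  have htilt : nuh = ENNReal.ofReal Z • (ν.tilted fun x => -F x) := by
    rw [Measure.tilted, ← withDensity_smul _ (by fun_prop)]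
    refine withDensity_congr_ae (ae_of_all _ fun x => ?_)
    simp only [Pi.smul_apply, smul_eq_mul]
    rw [← ENNReal.ofReal_mul hZpos.le, mul_div_cancel₀ _ hZpos.ne']
  have hμtilt : μ ≪ ν.tilted fun x => -F x :=
    hμν.trans (absolutelyContinuous_tilted hexpF)
  -- llr μ nuh = F + llr μ ν a.e. μ
  have hllr : llr μ nuh =ᵐ[μ] fun x => F x + llr μ ν x := by
    have h1 : llr μ nuh =ᵐ[μ]
        fun x => llr μ (ν.tilted fun x => -F x) x - Real.log (ENNReal.ofReal Z).toReal := by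
      rw [htilt]
      exact llr_smul_right hμtilt (ENNReal.ofReal Z)
        (by simp [hZpos.ne', hZpos]) ENNReal.ofReal_ne_top
    have h2 := llr_tilted_right (f := fun x => -F x) hμν hexpF
    filter_upwards [h1, h2] with x hx1 hx2
    rw [hx1, hx2, ENNReal.toReal_ofReal hZpos.le]
    simp only [neg_neg]
    ring
  have hIntllr : Integrable (llr μ ν) μ := by
    refine (hEnt.sub hIntF).congr ?_
    filter_upwards [hllr] with x hx
    simp only [Pi.sub_apply]
    rw [hx]; ring
  have hIntEq : ∫ x, llr μ nuh x ∂μ = ∫ x, llr μ ν x ∂μ + ∫ x, F x ∂μ := by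
    rw [integral_congr_ae hllr, integral_add hIntF hIntllr]
    ring
  -- Donsker–Varadhan with g = -pF
  have hIntg : Integrable (fun x => -p * F x) μ := hIntF.const_mul _
  have hprob : IsProbabilityMeasure (ν.tilted fun x => -p * F x) :=
    isProbabilityMeasure_tilted hexp
  have hμtilt2 : μ ≪ ν.tilted fun x => -p * F x :=
    hμν.trans (absolutelyContinuous_tilted hexp)
  have hIntllr2 : Integrable (llr μ (ν.tilted fun x => -p * F x)) μ :=
    integrable_llr_tilted_right hμν hIntg hIntllr hexp
  have h0 : 0 ≤ ∫ x, llr μ (ν.tilted fun x => -p * F x) x ∂μ :=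
    aux_integral_llr_nonneg hμtilt2 hIntllr2
  have heq := integral_llr_tilted_right (f := fun x => -p * F x) hμν hIntg hexp hIntllr
  rw [hC] at heq
  rw [heq] at h0
  have hInt_pF : ∫ x, -p * F x ∂μ = -p * ∫ x, F x ∂μ := by
    rw [integral_const_mul]
  rw [hInt_pF] at h0
  -- combine
  have key : (p - 1) * ∫ x, llr μ ν x ∂μ ≤ p * ∫ x, llr μ nuh x ∂μ + Real.log C := by
    nlinarith [hIntEq, h0]
  have hgoal : (p / (p - 1)) * ∫ x, llr μ nuh x ∂μ + Real.log C / (p - 1)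
      = (p * ∫ x, llr μ nuh x ∂μ + Real.log C) / (p - 1) := by
    field_simp
  rw [hgoal, le_div_iff₀ hp0]
  linarith
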